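/- Let N ≥ 3 be an integer and 0 < α < N−1. Then |g_α(r)| ≤ 1 for every r with 0 < r < 1, where g_α(r) = α r^{−α−1} (α² r^{−2α−2} − (α+2−N)/(N−1)) / (1 + α² r^{−2α−2})^{3/2}. -/
import Mathlib


/-- The profile `g_α` of the datum of the extremal example. -/
noncomputable def gAlpha (N : ℕ) (α r : ℝ) : ℝ :=
  α * r ^ (-α - 1) * (α ^ 2 * r ^ (-2 * α - 2) - (α + 2 - N) / ((N : ℝ) - 1)) /
    (1 + α ^ 2 * r ^ (-2 * α - 2)) ^ ((3 : ℝ) / 2)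

/-- Core scalar inequality: for `u > 0` and `|c| ≤ 1`,
`|u (u² − c)| ≤ (1 + u²)^{3/2}`. -/
lemma gAlpha_core (u c : ℝ) (hupos : 0 < u) (hc1 : c ≤ 1) (hc2 : -1 ≤ c) :
    |u * (u ^ 2 - c) / (1 + u ^ 2) ^ ((3 : ℝ) / 2)| ≤ 1 := by
  have hden : (0 : ℝ) < 1 + u ^ 2 := by positivity
  have hdpos : (0 : ℝ) < (1 + u ^ 2) ^ ((3 : ℝ) / 2) := Real.rpow_pos_of_pos hden _
  rw [abs_div, abs_of_pos hdpos, div_le_one hdpos]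
  have hsplit : (1 + u ^ 2) ^ ((3 : ℝ) / 2)
      = (1 + u ^ 2) ^ ((1 : ℝ) / 2) * (1 + u ^ 2) := by
    rw [show ((3 : ℝ) / 2) = 1 / 2 + 1 by norm_num, Real.rpow_add hden,
      Real.rpow_one]
  have hhalf : 0 < (1 + u ^ 2) ^ ((1 : ℝ) / 2) := Real.rpow_pos_of_pos hden _
  have hXsq : ((1 + u ^ 2) ^ ((1 : ℝ) / 2)) ^ 2 = 1 + u ^ 2 := by
    rw [← Real.rpow_natCast ((1 + u ^ 2) ^ ((1 : ℝ) / 2)) 2,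
      ← Real.rpow_mul hden.le]
    norm_num
  rw [abs_le, hsplit]
  set X : ℝ := (1 + u ^ 2) ^ ((1 : ℝ) / 2) with hX
  clear_value X
  clear hsplit hdpos hX
  have hule : u ≤ X := by nlinarith [hXsq, hhalf, hupos]
  have hXge : (1 : ℝ) ≤ X := by nlinarith [hXsq, hhalf]
  constructor
  · have h1 : u * (u ^ 2 - 1) ≤ u * (u ^ 2 - c) := by nlinarith
    have h2 : -u ≤ u * (u ^ 2 - 1) := by nlinarith
    nlinarith [mul_le_mul_of_nonneg_right hule hden.le, sq_nonneg u]
  · have h1 : u * (u ^ 2 - c) ≤ u * (u ^ 2 + 1) := by nlinarith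
    nlinarith [mul_le_mul_of_nonneg_right hule hden.le]

/-- For `N ≥ 3` and `0 < α < N−1` one has `|g_α(r)| ≤ 1` for every `0 < r < 1`. -/
theorem gAlpha_abs_le_one (N : ℕ) (hN : 3 ≤ N) (α : ℝ) (hα : 0 < α)
    (hαN : α < (N : ℝ) - 1) (r : ℝ) (hr0 : 0 < r) (hr1 : r < 1) :
    |gAlpha N α r| ≤ 1 := by
  have hN3 : (3 : ℝ) ≤ (N : ℝ) := by exact_mod_cast hN
  have hsq : r ^ (-2 * α - 2) = (r ^ (-α - 1)) ^ 2 := by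
    rw [show (-2 * α - 2 : ℝ) = (-α - 1) * 2 by ring, Real.rpow_mul hr0.le,
      Real.rpow_two]
  have htpos : 0 < r ^ (-α - 1) := Real.rpow_pos_of_pos hr0 _
  have hupos : 0 < α * r ^ (-α - 1) := mul_pos hα htpos
  have hNd : (0 : ℝ) < (N : ℝ) - 1 := by linarith
  have hc1 : (α + 2 - N) / ((N : ℝ) - 1) ≤ 1 := by
    rw [div_le_one hNd]; linarith
  have hc2 : -1 ≤ (α + 2 - N) / ((N : ℝ) - 1) := by
    rw [le_div_iff₀ hNd]; linarith
  have hkey : gAlpha N α r = (α * r ^ (-α - 1)) *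
      ((α * r ^ (-α - 1)) ^ 2 - (α + 2 - N) / ((N : ℝ) - 1)) /
      (1 + (α * r ^ (-α - 1)) ^ 2) ^ ((3 : ℝ) / 2) := by
    rw [gAlpha, hsq]; ring_nf
  rw [hkey]
  exact gAlpha_core _ _ hupos hc1 hc2
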